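/- Let X be a metric space and ν a Borel measure on X. If Y ⊆ X is a nondegenerate continuum (a compact connected set with more than one point), then there exists a point y ∈ Y such that for all r > 0 one has ν(B(y,r)) ≤ (10 r / diam(Y)) · ν(X). -/
import Mathlib


open Metric Set MeasureTheory Filter Topology unitInterval
open scoped NNReal ENNReal

noncomputable section

/-- The length (total variation) of a continuous path. -/
def pathLength {Z : Type*} [MetricSpace Z] (γ : C(unitInterval, Z)) : ℝ≥0∞ :=
  eVariationOn γ Set.univ

/-- The (real-valued) arclength function of a path. -/
def pathVar {Z : Type*} [MetricSpace Z] (γ : C(unitInterval, Z)) (t : ℝ) : ℝ :=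
  (eVariationOn γ {s : unitInterval | (s : ℝ) ≤ t}).toReal

/-- The arclength (Stieltjes) measure on the parameter interval associated to a path. -/
def lengthMeasure {Z : Type*} [MetricSpace Z] (γ : C(unitInterval, Z)) :
    MeasureTheory.Measure ℝ :=
  letI := Classical.propDecidable (Monotone (pathVar γ))
  if h : Monotone (pathVar γ) then h.stieltjesFunction.measure else 0

/-- The line integral `∫_γ ρ ds` of a density `ρ` along a path `γ` (with respect to
arclength). -/
def pathIntegral {Z : Type*} [MetricSpace Z] (ρ : Z → ℝ≥0∞) (γ : C(unitInterval, Z)) : ℝ≥0∞ :=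
  ∫⁻ t, ρ (γ (Set.projIcc 0 1 zero_le_one t)) ∂(lengthMeasure γ)

/-- A density is admissible for a path family if every rectifiable path in the family has
`ρ`-length at least one. -/
def Admissible {Z : Type*} [MetricSpace Z] (ρ : Z → ℝ≥0∞) (Γ : Set C(unitInterval, Z)) : Prop :=
  ∀ γ ∈ Γ, pathLength γ < ⊤ → 1 ≤ pathIntegral ρ γ

/-- The `Q`-modulus of a family of paths in `Z`. -/
def modulus {Z : Type*} [MetricSpace Z] [MeasurableSpace Z] (Q : ℝ) (μ : Measure Z)
    (Γ : Set C(unitInterval, Z)) : ℝ≥0∞ :=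
  ⨅ (ρ : Z → ℝ≥0∞) (_ : Measurable ρ) (_ : Admissible ρ Γ), ∫⁻ z, ρ z ^ Q ∂μ

/-- A path is nonconstant if it takes at least two values. -/
def Nonconstant {Z : Type*} [MetricSpace Z] (γ : C(unitInterval, Z)) : Prop :=
  ∃ s t, γ s ≠ γ t

/-- A measure `μ` on a metric space is Ahlfors `Q`-regular. -/
def AhlforsRegular {Z : Type*} [MetricSpace Z] [MeasurableSpace Z] (μ : Measure Z)
    (Q : ℝ) : Prop :=
  ∃ C : ℝ≥0, 1 ≤ C ∧ ∀ (a : Z) (R : ℝ), 0 < R →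
    ENNReal.ofReal R ≤ EMetric.diam (Set.univ : Set Z) →
      ENNReal.ofReal (R ^ Q) / C ≤ μ (Metric.ball a R) ∧
      μ (Metric.ball a R) ≤ C * ENNReal.ofReal (R ^ Q)

/-- The metric cross-ratio of a four-tuple of points. -/
def crossRatio {Z : Type*} [MetricSpace Z] (z₁ z₂ z₃ z₄ : Z) : ℝ≥0 :=
  (nndist z₁ z₃ * nndist z₂ z₄) / (nndist z₁ z₄ * nndist z₂ z₃)

/-- A map is `η`-quasi-Möbius if it distorts cross-ratios of distinct four-tuples in a way
controlled by the homeomorphism `η : [0,∞) → [0,∞)`. -/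
def IsQuasiMobius {X Y : Type*} [MetricSpace X] [MetricSpace Y] (η : ℝ≥0 ≃ₜ ℝ≥0)
    (f : X → Y) : Prop :=
  ∀ x₁ x₂ x₃ x₄ : X, x₁ ≠ x₂ → x₁ ≠ x₃ → x₁ ≠ x₄ → x₂ ≠ x₃ → x₂ ≠ x₄ → x₃ ≠ x₄ →
    crossRatio (f x₁) (f x₂) (f x₃) (f x₄) ≤ η (crossRatio x₁ x₂ x₃ x₄)

/-- A map is `η`-quasisymmetric. -/
def IsQuasisymmetric {X Y : Type*} [MetricSpace X] [MetricSpace Y] (η : ℝ≥0 ≃ₜ ℝ≥0)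
    (f : X → Y) : Prop :=
  ∀ x₁ x₂ x₃ : X, x₁ ≠ x₂ → x₁ ≠ x₃ → x₂ ≠ x₃ →
    nndist (f x₁) (f x₂) / nndist (f x₁) (f x₃) ≤ η (nndist x₁ x₂ / nndist x₁ x₃)

/-- A metric space is Ahlfors `Q`-regular (with respect to `Q`-dimensional Hausdorff
measure). -/
def AhlforsRegularSpace (Y : Type*) [MetricSpace Y] (Q : ℝ) : Prop :=
  letI : MeasurableSpace Y := borel Y
  haveI : BorelSpace Y := ⟨rfl⟩
  AhlforsRegular (μH[Q] : Measure Y) Q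

/-- The Ahlfors regular conformal dimension of a metric space: the infimum of the Hausdorff
dimensions of all Ahlfors regular metric spaces quasisymmetrically homeomorphic to it. -/
def arConfDim (Z : Type u) [MetricSpace Z] : ℝ≥0∞ :=
  sInf { D : ℝ≥0∞ | ∃ (Y : Type u) (_ : MetricSpace Y) (Q' : ℝ) (η : ℝ≥0 ≃ₜ ℝ≥0) (f : Z ≃ₜ Y),
      AhlforsRegularSpace Y Q' ∧ IsQuasisymmetric η f ∧ D = dimH (Set.univ : Set Y) }

/-- The distance between two subsets of a metric space, as an extended real. -/
def setSep {Z : Type*} [MetricSpace Z] (E F : Set Z) : ℝ≥0∞ :=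
  ⨅ (x ∈ E) (y ∈ F), edist x y

/-- The relative distance `Δ(E,F) = dist(E,F)/min(diam E, diam F)` of two sets. -/
def relDist {Z : Type*} [MetricSpace Z] (E F : Set Z) : ℝ≥0∞ :=
  setSep E F / min (EMetric.diam E) (EMetric.diam F)

/-- The family of paths joining `E` to `F`. -/
def joinPaths {Z : Type*} [MetricSpace Z] (E F : Set Z) : Set C(unitInterval, Z) :=
  {γ | γ 0 ∈ E ∧ γ 1 ∈ F}

/-- A metric measure space is `Q`-Loewner if it is connected and the `Q`-modulus of the family
of paths joining two disjoint nondegenerate continua is bounded below by a positive decreasing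
function of their relative distance. -/
def IsLoewner (Z : Type*) [MetricSpace Z] [MeasurableSpace Z] (Q : ℝ) (μ : Measure Z) : Prop :=
  ConnectedSpace Z ∧
  ∃ Ψ : ℝ≥0∞ → ℝ≥0∞, Antitone Ψ ∧ (∀ t, t ≠ 0 → t ≠ ⊤ → 0 < Ψ t) ∧
    ∀ E F : Set Z, IsCompact E → IsConnected E → E.Nontrivial →
      IsCompact F → IsConnected F → F.Nontrivial → Disjoint E F →
      Ψ (relDist E F) ≤ modulus Q μ (joinPaths E F)

/-- A path is thick if every neighborhood of it in `C([0,1],Z)` contains a family of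
nonconstant paths of positive `Q`-modulus. -/
def IsThick {Z : Type*} [MetricSpace Z] [MeasurableSpace Z] (Q : ℝ) (μ : Measure Z)
    (γ : C(unitInterval, Z)) : Prop :=
  ∀ ε : ℝ, 0 < ε → 0 < modulus Q μ {α | α ∈ Metric.ball γ ε ∧ Nonconstant α}

end

theorem exists_point_with_small_mass_balls
    {X : Type*} [MetricSpace X] [MeasurableSpace X] [BorelSpace X]
    (ν : Measure X) (Y : Set X) (hYcpt : IsCompact Y) (hYconn : IsConnected Y)
    (hYnt : Y.Nontrivial)
    : ∃ y ∈ Y, ∀ r : ℝ, 0 < r →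
      ν (Metric.ball y r) ≤
        ENNReal.ofReal (10 * r / Metric.diam Y) * ν Set.univ := by
  classical
  obtain ⟨y0, hy0, y1, hy1, hne01⟩ := hYnt
  have hYb := hYcpt.isBounded
  have hD : 0 < Metric.diam Y :=
    (dist_pos.2 hne01).trans_le (Metric.dist_le_diam_of_mem hYb hy0 hy1)
  set D := Metric.diam Y with hDdef
  rcases eq_or_ne (ν Set.univ) ⊤ with htop | hfin
  · refine ⟨y0, hy0, fun r hr => ?_⟩
    rw [htop, ENNReal.mul_top (by positivity)]
    exact le_top
  by_contra hcon
  push_neg at hcon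
  choose! r hrpos hrlt using hcon
  have hrle : ∀ y ∈ Y, r y ≤ D := by
    intro y hy
    by_contra hbig
    push_neg at hbig
    have h1 : (1:ℝ) ≤ 10 * r y / D := by
      rw [le_div_iff₀ hD]; nlinarith
    have hlt2 : ENNReal.ofReal (10 * r y / D) * ν Set.univ < ν Set.univ :=
      (hrlt y hy).trans_le (measure_mono (Set.subset_univ _))
    have h2 : ν Set.univ ≤ ENNReal.ofReal (10 * r y / D) * ν Set.univ := by
      nth_rewrite 1 [← one_mul (ν Set.univ)]
      exact mul_le_mul_left (ENNReal.one_le_ofReal.2 h1) _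
    exact lt_irrefl _ (h2.trans_lt hlt2)
  -- the diameter is attained at a pair (a, b)
  obtain ⟨⟨a, b⟩, habY, hab⟩ := (hYcpt.prod hYcpt).exists_isMaxOn
    (Set.Nonempty.prod ⟨y0, hy0⟩ ⟨y1, hy1⟩)
    (continuous_dist.continuousOn : ContinuousOn (fun p : X × X => dist p.1 p.2) (Y ×ˢ Y))
  have haY : a ∈ Y := habY.1
  have hbY : b ∈ Y := habY.2
  have hdab : dist a b = D := by
    refine le_antisymm (Metric.dist_le_diam_of_mem hYb haY hbY) ?_
    exact Metric.diam_le_of_forall_dist_le dist_nonneg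
      (fun x hx y hy => hab (Set.mk_mem_prod hx hy))
  set f : X → ℝ := fun x => dist a x with hf
  have himg : Icc (0:ℝ) D ⊆ f '' Y := by
    have := hYconn.isPreconnected.intermediate_value haY hbY
      ((continuous_const.dist continuous_id).continuousOn : ContinuousOn f Y)
    simpa [hf, dist_self, hdab] using this
  -- finite subcover of [0, D] by intervals around f y of radius r y
  have hcov : Icc (0:ℝ) D ⊆ ⋃ i : Y, Metric.ball (f i) (r i) := by
    intro t ht
    obtain ⟨y, hyY, hfy⟩ := himg ht
    exact mem_iUnion.2 ⟨⟨y, hyY⟩, hfy ▸ Metric.mem_ball_self (hrpos y hyY)⟩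
  obtain ⟨T, hT⟩ := isCompact_Icc.elim_finite_subcover
    (fun i : Y => Metric.ball (f i) (r i)) (fun i => isOpen_ball) hcov
  -- Vitali covering lemma
  obtain ⟨u, huT, hdisj, hcover⟩ :=
    Vitali.exists_disjoint_subfamily_covering_enlargement_closedBall
      (↑T : Set Y) (fun i : Y => f i) (fun i : Y => r i) D
      (fun i _ => hrle i i.2) 4 (by norm_num)
  have hufin : u.Finite := T.finite_toSet.subset huT
  set s : Finset Y := hufin.toFinset with hs
  have hscoe : (↑s : Set Y) = u := hufin.coe_toFinset
  -- u is nonempty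
  have hsne : s.Nonempty := by
    obtain ⟨i, hiT, _⟩ := mem_iUnion₂.1 (hT ⟨le_rfl, hD.le⟩)
    obtain ⟨j, hj, -⟩ := hcover i hiT
    exact ⟨j, hufin.mem_toFinset.2 hj⟩
  -- [0, D] is covered by the 4-fold enlargements
  have hIcc : Icc (0:ℝ) D ⊆ ⋃ i ∈ s, Metric.closedBall (f i) (4 * r i) := by
    intro t ht
    obtain ⟨i, hiT, hti⟩ := mem_iUnion₂.1 (hT ht)
    obtain ⟨j, hj, hsub⟩ := hcover i hiT
    exact mem_iUnion₂.2 ⟨j, hufin.mem_toFinset.2 hj,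
      hsub (Metric.ball_subset_closedBall hti)⟩
  -- hence the sum of the radii is at least D/8
  have hsumr : D ≤ ∑ i ∈ s, 8 * r i := by
    have h1 : ENNReal.ofReal D ≤ ∑ i ∈ s, ENNReal.ofReal (8 * r i) := by
      calc ENNReal.ofReal D = volume (Icc (0:ℝ) D) := by
            rw [Real.volume_Icc, sub_zero]
        _ ≤ volume (⋃ i ∈ s, Metric.closedBall (f i) (4 * r i)) := measure_mono hIcc
        _ ≤ ∑ i ∈ s, volume (Metric.closedBall (f i) (4 * r i)) :=
            measure_biUnion_finset_le s _
        _ = ∑ i ∈ s, ENNReal.ofReal (8 * r i) := by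
            refine Finset.sum_congr rfl fun i _ => ?_
            rw [Real.volume_closedBall]
            ring_nf
    rw [← ENNReal.ofReal_sum_of_nonneg
      (fun i hi => by have := (hrpos i i.2).le; positivity)] at h1
    exact (ENNReal.ofReal_le_ofReal_iff
      (Finset.sum_nonneg fun i hi => by have := (hrpos i i.2).le; positivity)).1 h1
  -- the corresponding balls in X are disjoint
  have hdX : (↑s : Set Y).PairwiseDisjoint fun i : Y => Metric.ball (i : X) (r i) := by
    rw [hscoe]
    intro i hi j hj hij
    have hd := hdisj hi hj hij
    refine Set.disjoint_left.2 fun x hxi hxj => ?_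
    have hdij : dist (i : X) (j : X) < r i + r j :=
      calc dist (i : X) (j : X) ≤ dist (i : X) x + dist x (j : X) := dist_triangle _ _ _
        _ < r i + r j := by
            have h1 : dist x (i : X) < r i := hxi
            have h2 : dist x (j : X) < r j := hxj
            rw [dist_comm (i : X) x]
            linarith
    have hfij : |f i - f j| < r i + r j := by
      refine lt_of_le_of_lt ?_ hdij
      have := abs_dist_sub_le (i : X) (j : X) a
      simpa [hf, dist_comm] using this
    have h1 := abs_lt.1 hfij
    have hri : (0:ℝ) ≤ r i := (hrpos i i.2).le
    have hrj : (0:ℝ) ≤ r j := (hrpos j j.2).le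
    refine Set.not_disjoint_iff.2 ⟨min (f i + r i) (f j + r j), ?_, ?_⟩ hd
    · simp only [Real.closedBall_eq_Icc, Set.mem_Icc]
      constructor
      · exact le_min (by linarith) (by linarith)
      · exact min_le_left _ _
    · simp only [Real.closedBall_eq_Icc, Set.mem_Icc]
      constructor
      · exact le_min (by linarith) (by linarith)
      · exact min_le_right _ _
  -- derive the contradiction
  have h3 : ∑ i ∈ s, ENNReal.ofReal (10 * r i / D) * ν Set.univ
      < ∑ i ∈ s, ν (Metric.ball (i : X) (r i)) :=
    ENNReal.sum_lt_sum_of_nonempty hsne fun i _ => hrlt i i.2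
  have h4 : ∑ i ∈ s, ν (Metric.ball (i : X) (r i)) ≤ ν Set.univ := by
    rw [← measure_biUnion_finset hdX fun i _ => measurableSet_ball]
    exact measure_mono (Set.subset_univ _)
  have h5 : ν Set.univ ≤ ∑ i ∈ s, ENNReal.ofReal (10 * r i / D) * ν Set.univ := by
    rw [← Finset.sum_mul]
    have hone : (1:ℝ≥0∞) ≤ ∑ i ∈ s, ENNReal.ofReal (10 * r i / D) := by
      rw [← ENNReal.ofReal_sum_of_nonneg (fun i hi => by
        have := (hrpos i i.2).le
        positivity)]
      refine ENNReal.one_le_ofReal.2 ?_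
      rw [← Finset.sum_div]
      rw [one_le_div hD]
      calc D ≤ ∑ i ∈ s, 8 * r i := hsumr
        _ ≤ ∑ i ∈ s, 10 * r i := Finset.sum_le_sum fun i hi => by
            have := (hrpos i i.2).le; linarith
    calc ν Set.univ = 1 * ν Set.univ := (one_mul _).symm
      _ ≤ _ := mul_le_mul_left hone _
  exact lt_irrefl _ ((h5.trans_lt h3).trans_le h4)
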